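/- For every finite simple graph G and every vertex v of G, if G' denotes the graph obtained from G by choosing one vertex in each connected component of G, adding two new vertices w and w', and adding an edge from w to each chosen vertex and to w', then G' is connected and τ(G') = τ(G) + 1. Consequently, for two finite simple graphs G and H, τ(G) ≥ τ(H) if and only if τ(G') ≥ τ(H'). -/

import Mathlib

open SimpleGraph

/-- `C` is a vertex cover of `G`: every edge of `G` has an endpoint in `C`. -/
def IsVertexCover {V : Type} (G : SimpleGraph V) (C : Set V) : Prop :=
  ∀ ⦃u v : V⦄, G.Adj u v → u ∈ C ∨ v ∈ C

/-- `C` is a connected vertex cover of `G`: a vertex cover inducing a connected subgraph. -/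
def IsConnectedVertexCover {V : Type} (G : SimpleGraph V) (C : Set V) : Prop :=
  _root_.IsVertexCover G C ∧ (G.induce C).Connected

/-- The vertex cover number `τ(G)`. -/
noncomputable def tau {V : Type} (G : SimpleGraph V) : ℕ :=
  sInf {n | ∃ C : Set V, _root_.IsVertexCover G C ∧ C.ncard = n}

/-- The connected vertex cover number `τ_c(G)`. -/
noncomputable def tauc {V : Type} (G : SimpleGraph V) : ℕ :=
  sInf {n | ∃ C : Set V, IsConnectedVertexCover G C ∧ C.ncard = n}

/-- The graph obtained from `G` by adding two new vertices `w = Sum.inr false` and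
`w' = Sum.inr true`, and adding an edge from `w` to `w'` and from `w` to the chosen
representative `rep K` of each connected component `K` of `G`. -/
def augment {V : Type} (G : SimpleGraph V) (rep : G.ConnectedComponent → V) :
    SimpleGraph (V ⊕ Bool) :=
  SimpleGraph.fromRel (fun a b =>
    match a, b with
    | Sum.inl u, Sum.inl v => G.Adj u v
    | Sum.inr false, Sum.inl v => v ∈ Set.range rep
    | Sum.inr false, Sum.inr true => True
    | _, _ => False)

lemma tau_exists {V : Type} [Fintype V] (G : SimpleGraph V) :
    ∃ C : Set V, _root_.IsVertexCover G C ∧ C.ncard = tau G := by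
  have hne : {n | ∃ C : Set V, _root_.IsVertexCover G C ∧ C.ncard = n}.Nonempty :=
    ⟨(Set.univ : Set V).ncard, Set.univ, fun _ _ _ => Or.inl trivial, rfl⟩
  exact Nat.sInf_mem hne

lemma tau_le {V : Type} (G : SimpleGraph V) {C : Set V} (h : _root_.IsVertexCover G C) :
    tau G ≤ C.ncard :=
  Nat.sInf_le ⟨C, h, rfl⟩

lemma augment_adj_inl {V : Type} (G : SimpleGraph V) (rep : G.ConnectedComponent → V)
    {u v : V} (h : G.Adj u v) : (augment G rep).Adj (Sum.inl u) (Sum.inl v) := by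
  rw [augment, fromRel_adj]
  exact ⟨by simpa using h.ne, Or.inl h⟩

lemma augment_main {V : Type} [Fintype V] (G : SimpleGraph V)
    (rep : G.ConnectedComponent → V)
    (hrep : ∀ K : G.ConnectedComponent, G.connectedComponentMk (rep K) = K) :
    (augment G rep).Connected ∧ tau (augment G rep) = tau G + 1 := by
  set G' := augment G rep with hG'
  have hub : ∀ a : V ⊕ Bool, G'.Reachable a (Sum.inr false) := by
    intro a
    match a with
    | Sum.inr false => exact Reachable.refl _
    | Sum.inr true =>
        refine (Adj.reachable ?_)
        rw [hG', augment, fromRel_adj]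
        exact ⟨by simp, Or.inr trivial⟩
    | Sum.inl v =>
        have hK : G.Reachable v (rep (G.connectedComponentMk v)) := by
          have := hrep (G.connectedComponentMk v)
          exact (SimpleGraph.ConnectedComponent.exact this).symm
        have h1 : G'.Reachable (Sum.inl v) (Sum.inl (rep (G.connectedComponentMk v))) :=
          hK.map ⟨Sum.inl, fun h => augment_adj_inl G rep h⟩
        refine h1.trans (Adj.reachable ?_)
        rw [hG', augment, fromRel_adj]
        exact ⟨by simp, Or.inr (by simp)⟩
  have hconn : G'.Connected := by
    rw [connected_iff]
    exact ⟨fun a b => (hub a).trans (hub b).symm, ⟨Sum.inr false⟩⟩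
  refine ⟨hconn, le_antisymm ?_ ?_⟩
  · -- upper bound
    obtain ⟨C, hC, hcard⟩ := tau_exists G
    have hcov : _root_.IsVertexCover G' (insert (Sum.inr false) (Sum.inl '' C)) := by
      rintro a b hab
      rw [hG', augment, fromRel_adj] at hab
      obtain ⟨hne, hr⟩ := hab
      match a, b with
      | Sum.inl u, Sum.inl v =>
          have : G.Adj u v := by rcases hr with h | h; exact h; exact h.symm
          rcases hC this with h | h
          · exact Or.inl (Set.mem_insert_iff.2 (Or.inr ⟨u, h, rfl⟩))
          · exact Or.inr (Set.mem_insert_iff.2 (Or.inr ⟨v, h, rfl⟩))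
      | Sum.inr false, _ => exact Or.inl (Set.mem_insert _ _)
      | _, Sum.inr false => exact Or.inr (Set.mem_insert _ _)
      | Sum.inr true, Sum.inl v => rcases hr with h | h <;> exact absurd h (by simp)
      | Sum.inl v, Sum.inr true => rcases hr with h | h <;> exact absurd h (by simp)
      | Sum.inr true, Sum.inr true => exact absurd rfl hne
    have := tau_le G' hcov
    have hni : (Sum.inr false : V ⊕ Bool) ∉ Sum.inl '' C := by simp
    rw [Set.ncard_insert_of_notMem hni (Set.toFinite _),
      Set.ncard_image_of_injective _ Sum.inl_injective, hcard] at this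
    exact this
  · -- lower bound
    obtain ⟨C', hC', hcard'⟩ := tau_exists G'
    set C : Set V := Sum.inl ⁻¹' C' with hCdef
    have hcov : _root_.IsVertexCover G C := fun u v h => hC' (augment_adj_inl G rep h)
    have hwedge : (Sum.inr false : V ⊕ Bool) ∈ C' ∨ (Sum.inr true : V ⊕ Bool) ∈ C' := by
      refine hC' ?_
      rw [hG', augment, fromRel_adj]
      exact ⟨by simp, Or.inl trivial⟩
    obtain ⟨b, hb⟩ : ∃ b : Bool, (Sum.inr b : V ⊕ Bool) ∈ C' := by
      rcases hwedge with h | h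
      exacts [⟨false, h⟩, ⟨true, h⟩]
    have hsub : insert (Sum.inr b) (Sum.inl '' C) ⊆ C' := by
      rintro x hx
      rcases Set.mem_insert_iff.1 hx with rfl | ⟨v, hv, rfl⟩
      · exact hb
      · exact hv
    have hle : (insert (Sum.inr b) (Sum.inl '' C)).ncard ≤ C'.ncard :=
      Set.ncard_le_ncard hsub (Set.toFinite _)
    rw [Set.ncard_insert_of_notMem (by simp) (Set.toFinite _),
      Set.ncard_image_of_injective _ Sum.inl_injective] at hle
    have := tau_le G hcov
    omega

/-- The augmented graph `G'` (obtained by choosing one vertex in each connected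
component of `G`, adding two new vertices `w, w'`, and joining `w` to `w'` and to all
chosen vertices) is connected and satisfies `τ(G') = τ(G) + 1`; consequently, for two
graphs `G` and `H`, `τ(G) ≥ τ(H)` iff `τ(G') ≥ τ(H')`. -/
theorem augment_tau :
    (∀ {V : Type} [Fintype V] (G : SimpleGraph V) (rep : G.ConnectedComponent → V),
      (∀ K : G.ConnectedComponent, G.connectedComponentMk (rep K) = K) →
      (augment G rep).Connected ∧ tau (augment G rep) = tau G + 1) ∧
    (∀ {V W : Type} [Fintype V] [Fintype W] (G : SimpleGraph V) (H : SimpleGraph W)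
      (repG : G.ConnectedComponent → V) (repH : H.ConnectedComponent → W),
      (∀ K : G.ConnectedComponent, G.connectedComponentMk (repG K) = K) →
      (∀ K : H.ConnectedComponent, H.connectedComponentMk (repH K) = K) →
      (tau H ≤ tau G ↔ tau (augment H repH) ≤ tau (augment G repG))) := by
  constructor
  · intro V _ G rep hrep
    exact augment_main G rep hrep
  · intro V W _ _ G H repG repH hG hH
    have h1 := (augment_main G repG hG).2
    have h2 := (augment_main H repH hH).2
    rw [h1, h2]
    omega
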